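/- Let f : F_2^n → F_2 and g : F_2^m → F_2 be Boolean functions with C^⊕_min[g] ≥ 2 (equivalently, g is not constant on any affine subspace of codimension ≤ 1). Then C^⊕_min[f ∘ g] ≥ C_min[f], where (f∘g)(y^{(1)},…,y^{(n)}) = f(g(y^{(1)}),…,g(y^{(n)})). -/

import Mathlib

open Finset

namespace Paper

/-- `f` is constant on the set `S`. -/
def ConstOn {n : ℕ} (f : (Fin n → ZMod 2) → ZMod 2) (S : Set (Fin n → ZMod 2)) : Prop :=
  ∃ c, ∀ y ∈ S, f y = c

/-- The subcube of points agreeing with `x` on the coordinates in `J`. -/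
def cube {n : ℕ} (J : Finset (Fin n)) (x : Fin n → ZMod 2) : Set (Fin n → ZMod 2) :=
  {y | ∀ i ∈ J, y i = x i}

/-- Certificate complexity of `f` at `x`. -/
noncomputable def C {n : ℕ} (f : (Fin n → ZMod 2) → ZMod 2) (x : Fin n → ZMod 2) : ℕ :=
  sInf {d | ∃ J : Finset (Fin n), J.card = d ∧ ConstOn f (cube J x)}

/-- Minimum certificate complexity of `f`. -/
noncomputable def Cmin {n : ℕ} (f : (Fin n → ZMod 2) → ZMod 2) : ℕ :=
  ⨅ x, C f x

/-- The affine subspace cut out by the parity constraints `⟨α j, ·⟩ = b j`. -/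
def affSol {n : ℕ} (d : ℕ) (α : Fin d → Fin n → ZMod 2) (b : Fin d → ZMod 2) :
    Set (Fin n → ZMod 2) :=
  {y | ∀ j, ∑ i, α j i * y i = b j}

/-- Parity certificate complexity of `f` at `x`. -/
noncomputable def pC {n : ℕ} (f : (Fin n → ZMod 2) → ZMod 2) (x : Fin n → ZMod 2) : ℕ :=
  sInf {d | ∃ (α : Fin d → Fin n → ZMod 2) (b : Fin d → ZMod 2),
    x ∈ affSol d α b ∧ ConstOn f (affSol d α b)}

/-- Minimum parity certificate complexity (parity kill number). -/
noncomputable def pCmin {n : ℕ} (f : (Fin n → ZMod 2) → ZMod 2) : ℕ := ⨅ x, pC f x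

/-- Maximum parity certificate complexity. -/
noncomputable def pCmax {n : ℕ} (f : (Fin n → ZMod 2) → ZMod 2) : ℕ := ⨆ x, pC f x

/-- Block composition `f ∘ g`. -/
def compose {n m : ℕ} (f : (Fin n → ZMod 2) → ZMod 2) (g : (Fin m → ZMod 2) → ZMod 2) :
    (Fin (m * n) → ZMod 2) → ZMod 2 :=
  fun y => f fun i => g fun j => y (finProdFinEquiv (j, i))

/-- The `k`-fold composition power of `f` (`power f k` agrees with `f^{∘k}` for `k ≥ 1`). -/
def power {n : ℕ} (f : (Fin n → ZMod 2) → ZMod 2) : (k : ℕ) → (Fin (n ^ k) → ZMod 2) → ZMod 2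
  | 0 => fun x => x (Fin.cast (pow_zero n).symm 0)
  | k + 1 => fun x => f fun i => power f k fun j =>
      x (Fin.cast (pow_succ n k).symm (finProdFinEquiv (j, i)))

/-- `f` is an affine function `x ↦ b ⊕ ⟨x, α⟩`. -/
def IsAffine {n : ℕ} (f : (Fin n → ZMod 2) → ZMod 2) : Prop :=
  ∃ (b : ZMod 2) (α : Fin n → ZMod 2), ∀ x, f x = b + ∑ i, α i * x i

/-- Parity decision trees on `n` input bits. -/
inductive PDT (n : ℕ) : Type
  | leaf : ZMod 2 → PDT n
  | node : (Fin n → ZMod 2) → PDT n → PDT n → PDT n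

/-- Evaluation of a parity decision tree. -/
def PDT.eval {n : ℕ} : PDT n → (Fin n → ZMod 2) → ZMod 2
  | .leaf b, _ => b
  | .node α t0 t1, x => if ∑ i, α i * x i = 0 then t0.eval x else t1.eval x

/-- Depth of a parity decision tree. -/
def PDT.depth {n : ℕ} : PDT n → ℕ
  | .leaf _ => 0
  | .node _ t0 t1 => max t0.depth t1.depth + 1

/-- Parity decision tree complexity of `f`. -/
noncomputable def DTp {n : ℕ} (f : (Fin n → ZMod 2) → ZMod 2) : ℕ :=
  sInf {d | ∃ T : PDT n, T.depth ≤ d ∧ ∀ x, T.eval x = f x}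

/-- Identify a bit with an element of `{-1, 1} ⊆ ℝ`. -/
noncomputable def toPM (b : Bool) : ℝ := if b then -1 else 1

/-- The Fourier coefficient `f̂(S)` of `f : {-1,1}^n → ℝ`. -/
noncomputable def fourier {n : ℕ} (f : (Fin n → Bool) → ℝ) (S : Finset (Fin n)) : ℝ :=
  (∑ x : Fin n → Bool, f x * ∏ i ∈ S, toPM (x i)) / 2 ^ n

open Classical in
/-- The Sort function as a real-valued function on `{-1,1}^4`. -/
noncomputable def sortR (x : Fin 4 → ℝ) : ℝ :=
  if (x 0 ≥ x 1 ∧ x 1 ≥ x 2 ∧ x 2 ≥ x 3) ∨ (x 0 ≤ x 1 ∧ x 1 ≤ x 2 ∧ x 2 ≤ x 3) then 1 else -1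

/-- The Sort function over `F_2` (ordering `0 < 1`). -/
def sortF (x : Fin 4 → ZMod 2) : ZMod 2 :=
  if ((x 1).val ≤ (x 0).val ∧ (x 2).val ≤ (x 1).val ∧ (x 3).val ≤ (x 2).val) ∨
     ((x 0).val ≤ (x 1).val ∧ (x 1).val ≤ (x 2).val ∧ (x 2).val ≤ (x 3).val) then 1 else 0

namespace Stmt7Aux

open Module

abbrev R2 : Type := ZMod 2

lemma r2_two (a v : R2) (h : a ≠ v) : a = v + 1 := by revert a v; decide
lemma r2_add_eq_zero {a b : R2} (h : a + b = 0) : a = b := by revert a b; decide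
lemma r2_cases (a : R2) : a = 0 ∨ a = 1 := by revert a; decide

section d
variable {d : ℕ}

def dot (β w : Fin d → R2) : R2 := ∑ j, β j * w j

lemma dot_add_left (β γ w : Fin d → R2) : dot (β + γ) w = dot β w + dot γ w := by
  simp [dot, add_mul, Finset.sum_add_distrib]

lemma dot_smul_left (c : R2) (β w : Fin d → R2) : dot (c • β) w = c * dot β w := by
  simp [dot, Finset.mul_sum, mul_assoc]

lemma dot_sub_left (β γ w : Fin d → R2) : dot (β - γ) w = dot β w - dot γ w := by
  simp [dot, sub_mul, Finset.sum_sub_distrib]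

lemma dot_zero_left (w : Fin d → R2) : dot (0 : Fin d → R2) w = 0 := by simp [dot]

lemma dot_zero_right (β : Fin d → R2) : dot β 0 = 0 := by simp [dot]

lemma dot_add_right (β w v : Fin d → R2) : dot β (w + v) = dot β w + dot β v := by
  simp [dot, mul_add, Finset.sum_add_distrib]

lemma dot_sub_right (β w v : Fin d → R2) : dot β (w - v) = dot β w - dot β v := by
  simp [dot, mul_sub, Finset.sum_sub_distrib]

lemma dot_sum_right {ι : Type*} (β : Fin d → R2) (E : Finset ι) (v : ι → Fin d → R2) :
    dot β (∑ i ∈ E, v i) = ∑ i ∈ E, dot β (v i) := by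
  classical
  induction E using Finset.induction_on with
  | empty => simp [dot_zero_right]
  | insert a s h ih => simp [Finset.sum_insert h, dot_add_right, ih]

lemma dot_single (j : Fin d) (w : Fin d → R2) : dot (Pi.single j 1) w = w j := by
  simp [dot, Pi.single_apply, ite_mul]

/-- dot as a linear map in the first argument. -/
def dotL (w : Fin d → R2) : (Fin d → R2) →ₗ[R2] R2 where
  toFun β := dot β w
  map_add' a b := dot_add_left a b w
  map_smul' c a := dot_smul_left c a w

@[simp] lemma dotL_apply (w β : Fin d → R2) : dotL w β = dot β w := rfl

end d

section sys
variable {d n m : ℕ}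

def Lvec (α : Fin d → Fin n → Fin m → R2) (i : Fin n) (u : Fin m → R2) : Fin d → R2 :=
  fun j => ∑ k, α j i k * u k

def bform (α : Fin d → Fin n → Fin m → R2) (β : Fin d → R2) (i : Fin n) : Fin m → R2 :=
  fun k => ∑ j, β j * α j i k

lemma dot_Lvec (α : Fin d → Fin n → Fin m → R2) (β : Fin d → R2) (i : Fin n) (u : Fin m → R2) :
    dot β (Lvec α i u) = dot (bform α β i) u := by
  simp only [dot, Lvec, bform, Finset.mul_sum, Finset.sum_mul]
  rw [Finset.sum_comm]
  congr 1; ext k; congr 1; ext j; ring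

lemma bform_add (α : Fin d → Fin n → Fin m → R2) (β γ : Fin d → R2) (i : Fin n) :
    bform α (β + γ) i = bform α β i + bform α γ i := by
  funext k; simp [bform, add_mul, Finset.sum_add_distrib]

def cvec (α : Fin d → Fin n → Fin m → R2) (E : Finset (Fin n)) (u : Fin n → Fin m → R2) :
    Fin d → R2 :=
  fun j => ∑ i ∈ E, ∑ k, α j i k * u i k

lemma cvec_eq_sum (α : Fin d → Fin n → Fin m → R2) (E : Finset (Fin n))
    (u : Fin n → Fin m → R2) : cvec α E u = ∑ i ∈ E, Lvec α i (u i) := by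
  funext j; simp [cvec, Lvec]

lemma dot_cvec (α : Fin d → Fin n → Fin m → R2) (β : Fin d → R2) (E : Finset (Fin n))
    (u : Fin n → Fin m → R2) :
    dot β (cvec α E u) = ∑ i ∈ E, dot (bform α β i) (u i) := by
  rw [cvec_eq_sum, dot_sum_right]
  exact Finset.sum_congr rfl fun i _ => dot_Lvec α β i (u i)

def seenP (α : Fin d → Fin n → Fin m → R2) (B : Submodule R2 (Fin d → R2)) (i : Fin n) : Prop :=
  ∃ β ∈ B, bform α β i ≠ 0

lemma not_seenP {α : Fin d → Fin n → Fin m → R2} {B : Submodule R2 (Fin d → R2)} {i : Fin n}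
    (h : ¬ seenP α B i) : ∀ β ∈ B, bform α β i = 0 := by
  intro β hβ; by_contra hne; exact h ⟨β, hβ, hne⟩

lemma seenP_mono {α : Fin d → Fin n → Fin m → R2} {B B' : Submodule R2 (Fin d → R2)}
    (h : B ≤ B') {i : Fin n} : seenP α B i → seenP α B' i := by
  rintro ⟨β, hβ, hne⟩; exact ⟨β, h hβ, hne⟩

end sys

open scoped Classical

section SH
variable {m n : ℕ} {g : (Fin m → R2) → R2}

lemma finrank_pos_of_ne_bot {d : ℕ} {B : Submodule R2 (Fin d → R2)} (h : B ≠ ⊥) :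
    1 ≤ finrank R2 B := by
  by_contra hc
  exact h (Submodule.finrank_eq_zero.mp (by omega))

theorem sumhit
    (Hsurj : ∀ v, ∃ u, g u = v)
    (Hslice : ∀ β : Fin m → R2, β ≠ 0 → ∀ c v, ∃ u, dot β u = c ∧ g u = v)
    (d : ℕ) (α : Fin d → Fin n → Fin m → R2) (z : Fin n → R2) :
    ∀ (N : ℕ) (B : Submodule R2 (Fin d → R2)) (E : Finset (Fin n)),
      finrank R2 B ≤ N →
      (∀ B' : Submodule R2 (Fin d → R2), B' ≤ B → B' ≠ ⊥ →
        finrank R2 B' ≤ (E.filter (seenP α B')).card) →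
      ∀ p : Fin d → R2, ∃ u : Fin n → Fin m → R2,
        (∀ i, g (u i) = z i) ∧ ∀ β ∈ B, dot β (cvec α E u) = dot β p := by
  intro N
  induction N with
  | zero =>
    intro B E hrank _ p
    have hB : B = ⊥ := Submodule.finrank_eq_zero.mp (by omega)
    subst hB
    choose u hu using fun i => Hsurj (z i)
    refine ⟨u, hu, ?_⟩
    rintro β hβ
    rw [Submodule.mem_bot] at hβ
    subst hβ
    rw [dot_zero_left, dot_zero_left]
  | succ N IH =>
    intro B E hrank hhall p
    by_cases hBbot : B = ⊥
    · subst hBbot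
      choose u hu using fun i => Hsurj (z i)
      refine ⟨u, hu, ?_⟩
      rintro β hβ
      rw [Submodule.mem_bot] at hβ
      subst hβ
      rw [dot_zero_left, dot_zero_left]
    by_cases htight : ∃ B' : Submodule R2 (Fin d → R2), B' ≤ B ∧ B' ≠ ⊥ ∧ B' ≠ B ∧
        (E.filter (seenP α B')).card ≤ finrank R2 B'
    · -- SPLIT case
      obtain ⟨B', hle, hbot, hne, hcard⟩ := htight
      set E' := E.filter (seenP α B') with hE'def
      have hlt : B' < B := lt_of_le_of_ne hle hne
      have hfrlt : finrank R2 B' < finrank R2 B := Submodule.finrank_lt_finrank_of_lt hlt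
      have hfr'1 : 1 ≤ finrank R2 B' := finrank_pos_of_ne_bot hbot
      have hhall1 : ∀ B₃ : Submodule R2 (Fin d → R2), B₃ ≤ B' → B₃ ≠ ⊥ →
          finrank R2 B₃ ≤ (E'.filter (seenP α B₃)).card := by
        intro B₃ h3 h3b
        have hsub : E.filter (seenP α B₃) ⊆ E'.filter (seenP α B₃) := by
          intro i hi
          rw [Finset.mem_filter] at hi ⊢
          exact ⟨Finset.mem_filter.mpr ⟨hi.1, seenP_mono h3 hi.2⟩, hi.2⟩
        exact le_trans (hhall B₃ (le_trans h3 hle) h3b) (Finset.card_le_card hsub)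
      obtain ⟨u', hu'g, hu'⟩ := IH B' E' (by omega) hhall1 p
      -- complement of B' inside B
      obtain ⟨qc, hcompl⟩ := Submodule.exists_isCompl (Submodule.comap B.subtype B')
      set B'' := Submodule.map B.subtype qc with hB''def
      have hB''le : B'' ≤ B := Submodule.map_subtype_le B qc
      have hmapc : Submodule.map B.subtype (Submodule.comap B.subtype B') = B' := by
        rw [Submodule.map_comap_subtype]; exact inf_eq_right.mpr hle
      have hsup : B' ⊔ B'' = B := by
        rw [← hmapc, hB''def, ← Submodule.map_sup, hcompl.sup_eq_top, Submodule.map_subtype_top]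
      have hdisj : B' ⊓ B'' = ⊥ := by
        rw [← hmapc, hB''def, ← Submodule.map_inf _ (Submodule.injective_subtype B),
          hcompl.inf_eq_bot, Submodule.map_bot]
      have hsum : finrank R2 B' + finrank R2 B'' = finrank R2 B := by
        have h := Submodule.finrank_sup_add_finrank_inf_eq B' B''
        rw [hsup, hdisj] at h
        simpa using h.symm
      have hhall2 : ∀ B₃ : Submodule R2 (Fin d → R2), B₃ ≤ B'' → B₃ ≠ ⊥ →
          finrank R2 B₃ ≤ ((E \ E').filter (seenP α B₃)).card := by
        intro B₃ h3 h3b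
        have hd3 : B₃ ⊓ B' = ⊥ := by
          apply le_bot_iff.mp
          calc B₃ ⊓ B' ≤ B'' ⊓ B' := inf_le_inf_right B' h3
          _ = B' ⊓ B'' := inf_comm B'' B'
          _ = ⊥ := hdisj
        have hr3 : finrank R2 (B₃ ⊔ B' : Submodule R2 (Fin d → R2))
            = finrank R2 B₃ + finrank R2 B' := by
          have h := Submodule.finrank_sup_add_finrank_inf_eq B₃ B'
          rw [hd3] at h
          simpa using h
        have hsupne : (B₃ ⊔ B' : Submodule R2 (Fin d → R2)) ≠ ⊥ := by
          intro h
          exact hbot (le_bot_iff.mp (h ▸ (le_sup_right : B' ≤ B₃ ⊔ B')))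
        have h0 := hhall (B₃ ⊔ B') (sup_le (le_trans h3 hB''le) hle) hsupne
        have hsub : E.filter (seenP α (B₃ ⊔ B')) ⊆ E' ∪ (E \ E').filter (seenP α B₃) := by
          intro i hi
          rw [Finset.mem_filter] at hi
          obtain ⟨hiE, β, hβ, hbne⟩ := hi
          by_cases hiE' : i ∈ E'
          · exact Finset.mem_union_left _ hiE'
          · refine Finset.mem_union_right _ (Finset.mem_filter.mpr
              ⟨Finset.mem_sdiff.mpr ⟨hiE, hiE'⟩, ?_⟩)
            obtain ⟨β₃, hβ₃, β', hβ', rfl⟩ := Submodule.mem_sup.mp hβ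
            have hns : ¬ seenP α B' i := by
              intro hs
              exact hiE' (Finset.mem_filter.mpr ⟨hiE, hs⟩)
            have hz' : bform α β' i = 0 := not_seenP hns β' hβ'
            refine ⟨β₃, hβ₃, ?_⟩
            intro hz3
            apply hbne
            rw [bform_add, hz3, hz', add_zero]
        have hcards : (E.filter (seenP α (B₃ ⊔ B'))).card ≤
            E'.card + ((E \ E').filter (seenP α B₃)).card :=
          le_trans (Finset.card_le_card hsub) (Finset.card_union_le _ _)
        rw [hr3] at h0
        omega
      obtain ⟨u'', hu''g, hu''⟩ := IH B'' (E \ E') (by omega) hhall2 (p - cvec α E' u')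
      refine ⟨fun i => if i ∈ E' then u' i else u'' i, ?_, ?_⟩
      · intro i; by_cases hi : i ∈ E' <;> simp [hi, hu'g, hu''g]
      · intro β hβ
        rw [← hsup] at hβ
        obtain ⟨β', hβ', β'', hβ'', rfl⟩ := Submodule.mem_sup.mp hβ
        have hE'sub : E' ⊆ E := Finset.filter_subset _ _
        have hsplitE : cvec α E (fun i => if i ∈ E' then u' i else u'' i)
            = cvec α E' u' + cvec α (E \ E') u'' := by
          funext j
          have hgen : ∀ (G : Fin n → R2), ∑ i ∈ E, G i
              = (∑ i ∈ E', G i) + ∑ i ∈ E \ E', G i := by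
            intro G
            rw [← Finset.sum_union Finset.disjoint_sdiff,
              Finset.union_sdiff_of_subset hE'sub]
          show ∑ i ∈ E, (∑ k, α j i k * (if i ∈ E' then u' i else u'' i) k) = _
          rw [hgen]
          show _ = cvec α E' u' j + cvec α (E \ E') u'' j
          congr 1
          · exact Finset.sum_congr rfl fun i hi => by simp [hi]
          · refine Finset.sum_congr rfl fun i hi => ?_
            have hni : i ∉ E' := (Finset.mem_sdiff.mp hi).2
            simp [hni]
        have hb'w2 : dot β' (cvec α (E \ E') u'') = 0 := by
          rw [dot_cvec]
          refine Finset.sum_eq_zero fun i hi => ?_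
          obtain ⟨hiE, hiE'⟩ := Finset.mem_sdiff.mp hi
          have hns : ¬ seenP α B' i := fun hs => hiE' (Finset.mem_filter.mpr ⟨hiE, hs⟩)
          rw [not_seenP hns β' hβ', dot_zero_left]
        have h1 := hu' β' hβ'
        have h2 := hu'' β'' hβ''
        rw [hsplitE, dot_add_left β' β'' (cvec α E' u' + cvec α (E \ E') u''),
          dot_add_left β' β'' p, dot_add_right β' _ _, dot_add_right β'' _ _,
          h1, hb'w2, h2, dot_sub_right]
        ring
    · -- NON-TIGHT case
      push_neg at htight
      have hEne : (E.filter (seenP α B)).Nonempty := by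
        apply Finset.card_pos.mp
        have := hhall B le_rfl hBbot
        have h1 := finrank_pos_of_ne_bot hBbot
        omega
      obtain ⟨istar, histar⟩ := hEne
      rw [Finset.mem_filter] at histar
      have hiE := histar.1
      obtain ⟨βs, hβs, hbne⟩ := histar.2
      obtain ⟨βhat, hβhat⟩ : ∃ v, v = bform α βs istar := ⟨_, rfl⟩
      have hbne' : βhat ≠ 0 := hβhat ▸ hbne
      obtain ⟨u₁, hu₁d, hu₁g⟩ := Hslice βhat hbne' 0 (z istar)
      obtain ⟨u₂, hu₂d, hu₂g⟩ := Hslice βhat hbne' 1 (z istar)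
      obtain ⟨wstar, hws⟩ : ∃ w, w = Lvec α istar u₁ + Lvec α istar u₂ := ⟨_, rfl⟩
      have hdLv : ∀ β : Fin d → R2, dot β wstar
          = dot (bform α β istar) u₁ + dot (bform α β istar) u₂ := by
        intro β
        rw [hws, dot_add_right, dot_Lvec, dot_Lvec]
      have hβsw : dot βs wstar = 1 := by
        rw [hdLv, ← hβhat, hu₁d, hu₂d, zero_add]
      obtain ⟨B₁, hB₁def⟩ : ∃ B₁, B₁ = B ⊓ LinearMap.ker (dotL wstar) := ⟨_, rfl⟩
      have hB₁le : B₁ ≤ B := hB₁def ▸ inf_le_left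
      have hB₁mem : ∀ β, β ∈ B₁ ↔ β ∈ B ∧ dot β wstar = 0 := by
        intro β
        rw [hB₁def, Submodule.mem_inf, LinearMap.mem_ker, dotL_apply]
      have hβnotin : βs ∉ B₁ := by
        intro h
        have h2 := ((hB₁mem βs).mp h).2
        rw [hβsw] at h2
        exact one_ne_zero h2
      have hlt : B₁ < B := lt_of_le_of_ne hB₁le (fun h => hβnotin (h ▸ hβs))
      have hfrlt : finrank R2 B₁ < finrank R2 B := Submodule.finrank_lt_finrank_of_lt hlt
      have hhall1 : ∀ B₃ : Submodule R2 (Fin d → R2), B₃ ≤ B₁ → B₃ ≠ ⊥ →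
          finrank R2 B₃ ≤ ((E.erase istar).filter (seenP α B₃)).card := by
        intro B₃ h3 h3b
        have h3B : B₃ ≤ B := le_trans h3 hB₁le
        have h3ne : B₃ ≠ B := fun h => hβnotin (h3 (h ▸ hβs))
        have hstr := htight B₃ h3B h3b h3ne
        have hkey : (E.filter (seenP α B₃)).card ≤
            ((E.erase istar).filter (seenP α B₃)).card + 1 := by
          rw [Finset.filter_erase]
          by_cases h : istar ∈ E.filter (seenP α B₃)
          · rw [Finset.card_erase_of_mem h]
            have : 1 ≤ (E.filter (seenP α B₃)).card := Finset.card_pos.mpr ⟨istar, h⟩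
            omega
          · rw [Finset.erase_eq_of_notMem h]
            omega
        omega
      obtain ⟨u', hu'g, hu'⟩ := IH B₁ (E.erase istar) (by omega) hhall1 (p - Lvec α istar u₁)
      obtain ⟨w', hw'def⟩ : ∃ w, w = cvec α (E.erase istar) u' := ⟨_, rfl⟩
      obtain ⟨e, hedef⟩ : ∃ e, e = dot βs p - dot βs w' := ⟨_, rfl⟩
      obtain ⟨x, hxor, hgx, hdx⟩ :
          ∃ x, (x = u₁ ∨ x = u₂) ∧ g x = z istar ∧ dot βhat x = e := by
        rcases r2_cases e with h | h
        · exact ⟨u₁, Or.inl rfl, hu₁g, by rw [hu₁d, h]⟩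
        · exact ⟨u₂, Or.inr rfl, hu₂g, by rw [hu₂d, h]⟩
      refine ⟨fun i => if i = istar then x else u' i, ?_, ?_⟩
      · intro i
        by_cases h : i = istar
        · subst h; simpa using hgx
        · simp only [h, if_false]; exact hu'g i
      · intro β hβ
        obtain ⟨ε, hεdef⟩ : ∃ e, e = dot β wstar := ⟨_, rfl⟩
        obtain ⟨β₁, hβ₁def⟩ : ∃ c, c = β - ε • βs := ⟨_, rfl⟩
        have hβ₁B : β₁ ∈ B₁ := by
          refine (hB₁mem β₁).mpr ⟨hβ₁def ▸ B.sub_mem hβ (B.smul_mem ε hβs), ?_⟩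
          rw [hβ₁def, dot_sub_left, dot_smul_left, hβsw, mul_one, hεdef, sub_self]
        have hsplit : cvec α E (fun i => if i = istar then x else u' i)
            = Lvec α istar x + w' := by
          funext j
          show ∑ i ∈ E, (∑ k, α j i k * (if i = istar then x else u' i) k) = _
          rw [← Finset.add_sum_erase E _ hiE]
          have hlhs1 : (∑ k, α j istar k * (if istar = istar then x else u' istar) k)
              = Lvec α istar x j := by simp [Lvec]
          have hlhs2 : ∑ i ∈ E.erase istar,
              (∑ k, α j i k * (if i = istar then x else u' i) k) = w' j := by
            rw [hw'def]
            refine Finset.sum_congr rfl fun i hi => ?_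
            have hne : i ≠ istar := (Finset.mem_erase.mp hi).1
            simp [hne]
          rw [hlhs1, hlhs2]
          rfl
        have hβ₁x : dot (bform α β₁ istar) x = dot (bform α β₁ istar) u₁ := by
          rcases hxor with h | h
          · rw [h]
          · rw [h]
            have hz : dot (bform α β₁ istar) u₁ + dot (bform α β₁ istar) u₂ = 0 := by
              rw [← hdLv, ((hB₁mem β₁).mp hβ₁B).2]
            exact (r2_add_eq_zero hz).symm
        have hβ₁w' : dot β₁ w' = dot β₁ p - dot (bform α β₁ istar) u₁ := by
          rw [hw'def, hu' β₁ hβ₁B, dot_sub_right, dot_Lvec]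
        have hβsval : dot βs (Lvec α istar x + w') = dot βs p := by
          rw [dot_add_right, dot_Lvec, ← hβhat, hdx, hedef]
          ring
        have hβ₁val : dot β₁ (Lvec α istar x + w') = dot β₁ p := by
          rw [dot_add_right, dot_Lvec, hβ₁x, hβ₁w']
          ring
        have hβrec : β = β₁ + ε • βs := by rw [hβ₁def, sub_add_cancel]
        rw [hsplit, hβrec, dot_add_left, dot_add_left, dot_smul_left, dot_smul_left,
          hβ₁val, hβsval]

end SH

section CORE
variable {m n : ℕ} {g : (Fin m → R2) → R2}

theorem core
    (Hsurj : ∀ v, ∃ u, g u = v)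
    (Hslice : ∀ β : Fin m → R2, β ≠ 0 → ∀ c v, ∃ u, dot β u = c ∧ g u = v) :
    ∀ (d : ℕ) (α : Fin d → Fin n → Fin m → R2) (b : Fin d → R2)
      (y₀ : Fin n → Fin m → R2), (∀ j, cvec α Finset.univ y₀ j = b j) →
      ∃ (J : Finset (Fin n)) (x : Fin n → R2), J.card ≤ d ∧
        ∀ z : Fin n → R2, (∀ i ∈ J, z i = x i) →
          ∃ y : Fin n → Fin m → R2,
            (∀ j, cvec α Finset.univ y j = b j) ∧ ∀ i, g (y i) = z i := by
  intro d
  induction d using Nat.strong_induction_on with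
  | _ d IH =>
  intro α b y₀ hy₀
  by_cases htrig : ∃ B : Submodule R2 (Fin d → R2), B ≠ ⊥ ∧
      (Finset.univ.filter (seenP α B)).card ≤ finrank R2 B
  · -- FREEZE case
    obtain ⟨B, hBbot, hKcard⟩ := htrig
    obtain ⟨K, hKdef⟩ : ∃ K, K = Finset.univ.filter (seenP α B) := ⟨_, rfl⟩
    have hKc : K.card ≤ finrank R2 B := hKdef ▸ hKcard
    have hnotK : ∀ i, i ∉ K → ∀ β ∈ B, bform α β i = 0 := by
      intro i hi
      apply not_seenP
      intro hs
      exact hi (hKdef ▸ Finset.mem_filter.mpr ⟨Finset.mem_univ i, hs⟩)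
    obtain ⟨B'', hcompl⟩ := Submodule.exists_isCompl B
    have hsum : finrank R2 B + finrank R2 B'' = d := by
      have h := Submodule.finrank_sup_add_finrank_inf_eq B B''
      rw [hcompl.sup_eq_top, hcompl.inf_eq_bot] at h
      have ht : finrank R2 (⊤ : Submodule R2 (Fin d → R2)) = d := by
        rw [finrank_top, finrank_fin_fun]
      have hb : finrank R2 (⊥ : Submodule R2 (Fin d → R2)) = 0 := finrank_bot R2 _
      omega
    have hfrB : 1 ≤ finrank R2 B := finrank_pos_of_ne_bot hBbot
    have hd' : finrank R2 B'' < d := by omega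
    obtain ⟨d', hd'def⟩ : ∃ d', d' = finrank R2 B'' := ⟨_, rfl⟩
    let bB : Basis (Fin d') R2 B'' := by
      rw [hd'def]
      exact Module.finBasis R2 B''
    obtain ⟨βr, hβr⟩ : ∃ βr : Fin d' → Fin d → R2, βr = fun r => ((bB r : B'') : Fin d → R2)
      := ⟨_, rfl⟩
    have hβrmem : ∀ r, βr r ∈ B'' := by
      intro r
      rw [hβr]
      exact (bB r).2
    obtain ⟨α'', hα''⟩ : ∃ α'' : Fin d' → Fin n → Fin m → R2,
        α'' = fun r i k => if i ∈ K then 0 else bform α (βr r) i k := ⟨_, rfl⟩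
    obtain ⟨b'', hb''⟩ : ∃ b'' : Fin d' → R2,
        b'' = fun r => dot (βr r) b - ∑ i ∈ K, dot (bform α (βr r) i) (y₀ i) := ⟨_, rfl⟩
    have hKfilter : Finset.univ.filter (fun i : Fin n => i ∈ K) = K := by
      ext i; simp
    have hsplitsum : ∀ (G : Fin n → R2), ∑ i, G i
        = (∑ i ∈ K, G i) + ∑ i ∈ Finset.univ.filter (fun i => i ∉ K), G i := by
      intro G
      rw [← Finset.sum_filter_add_sum_filter_not Finset.univ (fun i => i ∈ K) G, hKfilter]
    have hcvec'' : ∀ (y : Fin n → Fin m → R2) (r : Fin d'), cvec α'' Finset.univ y r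
        = ∑ i ∈ Finset.univ.filter (fun i => i ∉ K), dot (bform α (βr r) i) (y i) := by
      intro y r
      show ∑ i, (∑ k, α'' r i k * y i k) = _
      rw [hsplitsum]
      have h1 : ∑ i ∈ K, (∑ k, α'' r i k * y i k) = 0 := by
        refine Finset.sum_eq_zero fun i hi => Finset.sum_eq_zero fun k _ => ?_
        rw [hα'']
        simp [hi]
      have h2 : ∀ i ∈ Finset.univ.filter (fun i => i ∉ K),
          (∑ k, α'' r i k * y i k) = dot (bform α (βr r) i) (y i) := by
        intro i hi
        have hiK : i ∉ K := (Finset.mem_filter.mp hi).2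
        rw [hα'']
        simp only [hiK, if_false]
        rfl
      rw [h1, zero_add]
      exact Finset.sum_congr rfl h2
    have hcvecb : ∀ β : Fin d → R2, dot β (cvec α Finset.univ y₀) = dot β b := by
      intro β
      congr 1
      funext j
      exact hy₀ j
    have hsat'' : ∀ r, cvec α'' Finset.univ y₀ r = b'' r := by
      intro r
      rw [hcvec'' y₀ r, hb'']
      dsimp only
      have h3 : dot (βr r) b = (∑ i ∈ K, dot (bform α (βr r) i) (y₀ i))
          + ∑ i ∈ Finset.univ.filter (fun i => i ∉ K), dot (bform α (βr r) i) (y₀ i) := by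
        rw [← hcvecb (βr r), dot_cvec, hsplitsum]
      rw [h3]
      ring
    obtain ⟨J', x', hJ'card, hreal'⟩ := IH d' (by omega) α'' b'' y₀ hsat''
    refine ⟨K ∪ J', fun i => if i ∈ K then g (y₀ i) else x' i, ?_, ?_⟩
    · calc (K ∪ J').card ≤ K.card + J'.card := Finset.card_union_le _ _
        _ ≤ finrank R2 B + d' := by omega
        _ ≤ d := by omega
    · intro z hz
      obtain ⟨z', hz'⟩ : ∃ z' : Fin n → R2, z' = fun i => if i ∈ K then x' i else z i :=
        ⟨_, rfl⟩
      have hz'J' : ∀ i ∈ J', z' i = x' i := by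
        intro i hi
        rw [hz']
        by_cases hiK : i ∈ K
        · simp [hiK]
        · simp only [hiK, if_false]
          have := hz i (Finset.mem_union_right K hi)
          simpa [hiK] using this
      obtain ⟨y', hy'sat, hy'g⟩ := hreal' z' hz'J'
      refine ⟨fun i => if i ∈ K then y₀ i else y' i, ?_, ?_⟩
      · -- constraints
        obtain ⟨y, hydef⟩ : ∃ y : Fin n → Fin m → R2,
            y = fun i => if i ∈ K then y₀ i else y' i := ⟨_, rfl⟩
        show ∀ j, cvec α Finset.univ (fun i => if i ∈ K then y₀ i else y' i) j = b j
        rw [← hydef]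
        have hyK : ∀ i ∈ K, y i = y₀ i := by intro i hi; rw [hydef]; simp [hi]
        have hyN : ∀ i, i ∉ K → y i = y' i := by intro i hi; rw [hydef]; simp [hi]
        have hPsiB : ∀ β ∈ B, dot β (cvec α Finset.univ y) = dot β b := by
          intro β hβ
          rw [dot_cvec, ← hcvecb β, dot_cvec, hsplitsum, hsplitsum
            (fun i => dot (bform α β i) (y₀ i))]
          congr 1
          · exact Finset.sum_congr rfl fun i hi => by rw [hyK i hi]
          · refine Finset.sum_congr rfl fun i hi => ?_
            rw [hnotK i (Finset.mem_filter.mp hi).2 β hβ, dot_zero_left, dot_zero_left]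
        have hPsiC : ∀ r, dot (βr r) (cvec α Finset.univ y) = dot (βr r) b := by
          intro r
          rw [dot_cvec, hsplitsum (fun i => dot (bform α (βr r) i) (y i))]
          have hA : ∑ i ∈ K, dot (bform α (βr r) i) (y i)
              = ∑ i ∈ K, dot (bform α (βr r) i) (y₀ i) :=
            Finset.sum_congr rfl fun i hi => by rw [hyK i hi]
          have hB2 : ∑ i ∈ Finset.univ.filter (fun i => i ∉ K), dot (bform α (βr r) i) (y i)
              = b'' r := by
            rw [← hy'sat r, hcvec'' y' r]
            exact Finset.sum_congr rfl fun i hi =>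
              by rw [hyN i (Finset.mem_filter.mp hi).2]
          rw [hA, hB2, hb'']
          dsimp only
          ring
        -- assemble via linear map
        obtain ⟨Ψ, hΨ⟩ : ∃ Ψ : (Fin d → R2) →ₗ[R2] R2,
            Ψ = dotL (cvec α Finset.univ y) - dotL b := ⟨_, rfl⟩
        have hΨap : ∀ β, Ψ β = dot β (cvec α Finset.univ y) - dot β b := by
          intro β; rw [hΨ]; rfl
        have hkerB : B ≤ LinearMap.ker Ψ := by
          intro β hβ
          rw [LinearMap.mem_ker, hΨap, hPsiB β hβ, sub_self]
        have hkerC : B'' ≤ LinearMap.ker Ψ := by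
          have hspan : B'' = Submodule.span R2 (Set.range βr) := by
            rw [← Submodule.map_subtype_top B'']
            conv_lhs => rw [← bB.span_eq]
            rw [Submodule.map_span]
            congr 1
            rw [← Set.range_comp]
            rw [hβr]
            rfl
          rw [hspan, Submodule.span_le]
          rintro β ⟨r, rfl⟩
          rw [SetLike.mem_coe, LinearMap.mem_ker, hΨap, hPsiC r, sub_self]
        have hkertop : (⊤ : Submodule R2 (Fin d → R2)) ≤ LinearMap.ker Ψ := by
          rw [← hcompl.sup_eq_top]
          exact sup_le hkerB hkerC
        intro j
        have hj := hkertop (Submodule.mem_top (x := Pi.single j 1))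
        rw [LinearMap.mem_ker, hΨap, dot_single, dot_single, sub_eq_zero] at hj
        exact hj
      · intro i
        by_cases hiK : i ∈ K
        · simp only [hiK, if_true]
          have := hz i (Finset.mem_union_left J' hiK)
          rw [this]
          simp [hiK]
        · simp only [hiK, if_false]
          rw [hy'g i, hz']
          simp [hiK]
  · -- SURJECTIVE case
    push_neg at htrig
    refine ⟨∅, fun _ => 0, by simp, ?_⟩
    intro z _
    have hhall : ∀ B' : Submodule R2 (Fin d → R2), B' ≤ ⊤ → B' ≠ ⊥ →
        finrank R2 B' ≤ (Finset.univ.filter (seenP α B')).card := by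
      intro B' _ hb'
      exact le_of_lt (htrig B' hb')
    obtain ⟨u, hug, hu⟩ := sumhit Hsurj Hslice d α z
      (finrank R2 (⊤ : Submodule R2 (Fin d → R2))) ⊤ Finset.univ le_rfl hhall b
    refine ⟨u, ?_, hug⟩
    intro j
    have := hu (Pi.single j 1) Submodule.mem_top
    rw [dot_single, dot_single] at this
    exact this

end CORE

section FINAL

lemma hsurj_of_pcmin {m : ℕ} {g : (Fin m → ZMod 2) → ZMod 2} (hg : 2 ≤ pCmin g) :
    ∀ v, ∃ u, g u = v := by
  intro v
  by_contra hc
  push_neg at hc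
  have hpc : 2 ≤ pC g (fun _ => 0) := le_trans hg (ciInf_le' _ _)
  have h0 : 0 ∈ {d | ∃ (α : Fin d → Fin m → ZMod 2) (b : Fin d → ZMod 2),
      (fun _ => (0 : ZMod 2)) ∈ affSol d α b ∧ ConstOn g (affSol d α b)} := by
    refine ⟨Fin.elim0, Fin.elim0, ?_, ?_⟩
    · intro j; exact j.elim0
    · exact ⟨v + 1, fun y _ => r2_two _ _ (hc y)⟩
  have h1 : pC g (fun _ => 0) ≤ 0 := Nat.sInf_le h0
  omega

lemma hslice_of_pcmin {m : ℕ} {g : (Fin m → ZMod 2) → ZMod 2} (hg : 2 ≤ pCmin g) :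
    ∀ β : Fin m → ZMod 2, β ≠ 0 → ∀ c v, ∃ u, dot β u = c ∧ g u = v := by
  intro β hβ c v
  have hex : ∃ k₀, β k₀ ≠ 0 := by
    by_contra h
    push_neg at h
    exact hβ (funext fun k => h k)
  obtain ⟨k₀, hk₀⟩ := hex
  have hk1 : β k₀ = 1 := by
    have := r2_two (β k₀) 0 hk₀
    rwa [zero_add] at this
  obtain ⟨w, hwdef⟩ : ∃ w : Fin m → ZMod 2, w = fun k => if k = k₀ then c else 0 := ⟨_, rfl⟩
  have hw : ∑ k, β k * w k = c := by
    rw [hwdef]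
    rw [Finset.sum_eq_single k₀]
    · simp [hk1]
    · intro k _ hk; simp [hk]
    · intro h; exact absurd (Finset.mem_univ k₀) h
  have hpc : 2 ≤ pC g w := le_trans hg (ciInf_le' _ _)
  by_contra hcon
  push_neg at hcon
  have h1 : 1 ∈ {d | ∃ (α : Fin d → Fin m → ZMod 2) (b : Fin d → ZMod 2),
      w ∈ affSol d α b ∧ ConstOn g (affSol d α b)} := by
    refine ⟨fun _ => β, fun _ => c, ?_, ⟨v + 1, ?_⟩⟩
    · intro j; exact hw
    · intro y hy
      have hyd : dot β y = c := hy 0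
      exact r2_two _ _ (hcon y hyd)
  have h2 : pC g w ≤ 1 := Nat.sInf_le h1
  omega

end FINAL

end Stmt7Aux

open Stmt7Aux

/-- if `C⊕_min[g] ≥ 2` then `C⊕_min[f ∘ g] ≥ C_min[f]`. -/
theorem stmt7 {n m : ℕ} (f : (Fin n → ZMod 2) → ZMod 2) (g : (Fin m → ZMod 2) → ZMod 2)
    (hg : 2 ≤ pCmin g) :
    Cmin f ≤ pCmin (compose f g) := by
  classical
  have Hsurj := hsurj_of_pcmin hg
  have Hslice := hslice_of_pcmin hg
  have hne : (Set.range (pC (compose f g))).Nonempty := ⟨_, ⟨fun _ => 0, rfl⟩⟩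
  obtain ⟨ystar, hystar⟩ := Nat.sInf_mem hne
  have hid : ∀ (y : Fin (m*n) → ZMod 2) (j : Fin (m*n)),
      (∑ t, (if t = j then (1:ZMod 2) else 0) * y t) = y j := by
    intro y j
    rw [Finset.sum_eq_single j]
    · simp
    · intro t _ ht; simp [ht]
    · intro h; exact absurd (Finset.mem_univ j) h
  have hSne : {d | ∃ (A : Fin d → Fin (m*n) → ZMod 2) (b : Fin d → ZMod 2),
      ystar ∈ affSol d A b ∧ ConstOn (compose f g) (affSol d A b)}.Nonempty := by
    refine ⟨m*n, fun j t => if t = j then 1 else 0, ystar, fun j => hid ystar j, ?_⟩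
    refine ⟨compose f g ystar, fun y hy => ?_⟩
    have hy' : ∀ j, (∑ t, (if t = j then (1:ZMod 2) else 0) * y t) = ystar j := hy
    have : y = ystar := funext fun j => (hid y j).symm.trans (hy' j)
    rw [this]
  have hmem : ∃ (A : Fin (pC (compose f g) ystar) → Fin (m*n) → ZMod 2)
      (b : Fin (pC (compose f g) ystar) → ZMod 2),
      ystar ∈ affSol _ A b ∧ ConstOn (compose f g) (affSol _ A b) := Nat.sInf_mem hSne
  obtain ⟨A, b, hyA, hconst⟩ := hmem
  have hyA' : ∀ j, (∑ t, A j t * ystar t) = b j := hyA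
  obtain ⟨Abar, hAbar⟩ : ∃ a : Fin (pC (compose f g) ystar) → Fin n → Fin m → ZMod 2,
      a = fun j i k => A j (finProdFinEquiv (k, i)) := ⟨_, rfl⟩
  have hconv : ∀ (Y : Fin (m*n) → ZMod 2) (j : Fin (pC (compose f g) ystar)),
      (∑ t, A j t * Y t)
        = cvec Abar Finset.univ (fun i k => Y (finProdFinEquiv (k, i))) j := by
    intro Y j
    calc ∑ t, A j t * Y t
        = ∑ p : Fin m × Fin n, A j (finProdFinEquiv p) * Y (finProdFinEquiv p) :=
          (Equiv.sum_comp finProdFinEquiv _).symm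
      _ = ∑ k : Fin m, ∑ i : Fin n,
            A j (finProdFinEquiv (k, i)) * Y (finProdFinEquiv (k, i)) :=
          Fintype.sum_prod_type _
      _ = ∑ i : Fin n, ∑ k : Fin m,
            A j (finProdFinEquiv (k, i)) * Y (finProdFinEquiv (k, i)) :=
          Finset.sum_comm
      _ = cvec Abar Finset.univ (fun i k => Y (finProdFinEquiv (k, i))) j := by
          rw [hAbar]; rfl
  obtain ⟨y0b, hy0b⟩ : ∃ yy : Fin n → Fin m → ZMod 2,
      yy = fun i k => ystar (finProdFinEquiv (k, i)) := ⟨_, rfl⟩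
  have hy₀ : ∀ j, cvec Abar Finset.univ y0b j = b j := by
    intro j
    rw [hy0b, ← hconv ystar j]
    exact hyA' j
  obtain ⟨J, x, hJcard, hreal⟩ := core Hsurj Hslice (pC (compose f g) ystar) Abar b y0b hy₀
  obtain ⟨c, hc⟩ := hconst
  have hconstcube : ConstOn f (cube J x) := by
    refine ⟨c, ?_⟩
    intro zq hzq
    obtain ⟨y, hysat, hyg⟩ := hreal zq hzq
    obtain ⟨Y, hYdef⟩ : ∃ Y : Fin (m*n) → ZMod 2,
        Y = fun t => y ((finProdFinEquiv.symm t).2) ((finProdFinEquiv.symm t).1) := ⟨_, rfl⟩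
    have hYb : ∀ i k, Y (finProdFinEquiv (k, i)) = y i k := by
      intro i k
      rw [hYdef]
      simp
    have hYmem : Y ∈ affSol (pC (compose f g) ystar) A b := by
      show ∀ j, (∑ t, A j t * Y t) = b j
      intro j
      rw [hconv Y j]
      have he : (fun i k => Y (finProdFinEquiv (k, i))) = y := by
        funext i k; exact hYb i k
      rw [he]
      exact hysat j
    have hfc := hc Y hYmem
    have hcomp : compose f g Y = f zq := by
      show f (fun i => g fun k => Y (finProdFinEquiv (k, i))) = f zq
      congr 1
      funext i
      have he : (fun k => Y (finProdFinEquiv (k, i))) = y i := funext fun k => hYb i k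
      rw [he]
      exact hyg i
    rw [← hcomp]
    exact hfc
  have h1 : C f x ≤ J.card := Nat.sInf_le ⟨J, rfl, hconstcube⟩
  have h2 : Cmin f ≤ C f x := ciInf_le' _ _
  have h3 : pCmin (compose f g) = pC (compose f g) ystar := hystar.symm
  omega


end Paper
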